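/- Let q be a prime power with q ≡ 1 (mod 4). Then the set X = {x ∈ F_q : x is a nonzero non-square and x − 2 is a nonzero square} is nonempty. -/

import Mathlib

section
variable {F : Type*} [Field F] [Fintype F]

lemma aux_mul_nonsq {a b : F} (ha : ¬IsSquare a) (hb : ¬IsSquare b) :
    IsSquare (a * b) := by
  classical
  have ha0 : a ≠ 0 := fun h => ha (h ▸ IsSquare.zero)
  have hb0 : b ≠ 0 := fun h => hb (h ▸ IsSquare.zero)
  have h1 := quadraticChar_neg_one_iff_not_isSquare.mpr ha
  have h2 := quadraticChar_neg_one_iff_not_isSquare.mpr hb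
  have : quadraticChar F (a * b) = 1 := by rw [map_mul, h1, h2]; ring
  exact (quadraticChar_one_iff_isSquare (mul_ne_zero ha0 hb0)).mp this

end

theorem stmt_13 (F : Type*) [Field F] [Fintype F] (hq : Fintype.card F % 4 = 1) :
    ∃ x : F, x ≠ 0 ∧ ¬ IsSquare x ∧ x - 2 ≠ 0 ∧ IsSquare (x - 2) := by
  by_contra hcon
  push_neg at hcon
  -- basic facts
  have hodd : Fintype.card F % 2 = 1 := by omega
  have hchar2 : ringChar F ≠ 2 := by
    intro h
    rw [FiniteField.even_card_of_char_two h] at hodd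
    exact absurd hodd (by norm_num)
  have h2 : (2 : F) ≠ 0 := by
    intro h
    exact hchar2 ((CharP.ringChar_of_prime_eq_zero Nat.prime_two h))
  have hneg1 : IsSquare (-1 : F) := FiniteField.isSquare_neg_one_iff.mpr (by omega)
  obtain ⟨i, hi⟩ := hneg1
  have hsqneg : ∀ a : F, IsSquare a → IsSquare (-a) := by
    rintro a ⟨y, rfl⟩
    exact ⟨i * y, by rw [show i * y * (i * y) = i * i * (y * y) by ring, ← hi]; ring⟩
  have hnegsq : ∀ a : F, ¬IsSquare a → ¬IsSquare (-a) := by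
    intro a ha hna
    exact ha (by simpa using hsqneg _ hna)
  -- Rule D
  have RD : ∀ x : F, ¬IsSquare x → x - 2 ≠ 0 → ¬IsSquare (x - 2) := by
    intro x hx hne
    exact hcon x (fun h0 => hx (h0 ▸ IsSquare.zero)) hx hne
  -- Rule U
  have RU : ∀ u : F, ¬IsSquare u → u + 2 ≠ 0 → ¬IsSquare (u + 2) := by
    intro u hu hne
    have h1 : ¬IsSquare (-u) := hnegsq u hu
    have h3 := RD (-u) h1 (by rw [show -u - 2 = -(u + 2) by ring, neg_ne_zero]; exact hne)
    intro hs
    exact h3 (by rw [show -u - 2 = -(u + 2) by ring]; exact hsqneg _ hs)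
  -- 2 is a square
  have h2sq : IsSquare (2 : F) := by
    by_contra h2n
    have h4 : (2 : F) + 2 ≠ 0 := by
      rw [show (2 : F) + 2 = 2 * 2 by ring]
      exact mul_ne_zero h2 h2
    exact RU 2 h2n h4 ⟨2, by ring⟩
  have hneg2 : IsSquare (-2 : F) := hsqneg 2 h2sq
  -- unconditional up-rule
  have RU' : ∀ u : F, ¬IsSquare u → ¬IsSquare (u + 2) := by
    intro u hu
    refine RU u hu (fun h0 => hu ?_)
    rw [eq_neg_of_add_eq_zero_left h0]
    exact hneg2
  -- closure under adding 2k
  have hclose : ∀ (k : ℕ) (u : F), ¬IsSquare u → ¬IsSquare (u + 2 * (k : F)) := by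
    intro k
    induction k with
    | zero => intro u hu; simpa using hu
    | succ n ih =>
      intro u hu
      have := RU' _ (ih u hu)
      rw [show u + 2 * (n : F) + 2 = u + 2 * ((n : F) + 1) by ring] at this
      simpa using this
  -- characteristic
  set p := ringChar F with hpdef
  haveI : CharP F p := ringChar.charP F
  have hp : p.Prime := CharP.char_is_prime F p
  have hpodd : p % 2 = 1 := Nat.odd_iff.mp (hp.odd_of_ne_two hchar2)
  have hk : ((2 * ((p + 1) / 2) : ℕ) : F) = 1 := by
    have h1 : 2 * ((p + 1) / 2) = p + 1 := by omega
    rw [h1]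
    push_cast
    simp [CharP.cast_eq_zero F p]
  -- pick a nonsquare
  obtain ⟨u, hu⟩ := FiniteField.exists_nonsquare (F := F) hchar2
  have hu0 : u ≠ 0 := fun h => hu (h ▸ IsSquare.zero)
  -- u + 1 is a nonsquare
  have hside : ¬IsSquare (u + 1) := by
    have h3 := hclose ((p + 1) / 2) u hu
    have h4 : 2 * ((((p + 1) / 2 : ℕ)) : F) = 1 := by
      rw [show (2 : F) * ((((p + 1) / 2 : ℕ)) : F) = ((2 * ((p + 1) / 2) : ℕ) : F) by push_cast; ring]
      exact hk
    rwa [h4] at h3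
  -- u + 1 is a square
  set m : F := 2 * u⁻¹ with hm
  have hm0 : m ≠ 0 := mul_ne_zero h2 (inv_ne_zero hu0)
  have hmns : ¬IsSquare m := by
    intro hs
    apply hu
    have h5 : u = 2 * m⁻¹ := by rw [hm]; field_simp
    rw [h5]
    exact h2sq.mul (isSquare_inv.mpr hs)
  have hinv_ns : ¬IsSquare m⁻¹ := fun hs => hmns (isSquare_inv.mp hs)
  have hs1 : IsSquare ((m + 2) * m⁻¹) := aux_mul_nonsq (RU' m hmns) hinv_ns
  have heq : (m + 2) * m⁻¹ = u + 1 := by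
    rw [hm]
    field_simp
    ring
  rw [heq] at hs1
  exact hside hs1
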